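/- If X ∈ O_n^T satisfies Tr_i X = 0 for some i ∈ [n] (in particular if n = 1), then ‖X‖_{W1} = (1/2)‖X‖₁. Consequently, for any quantum states ρ, σ ∈ S_n with Tr_i ρ = Tr_i σ for some i ∈ [n], one has ‖ρ − σ‖_{W1} = (1/2)‖ρ − σ‖₁. -/

import Mathlib

open scoped BigOperators
open scoped Classical
open scoped ComplexOrder

noncomputable section

namespace QW1

/-- Configurations of `n` qudits of local dimension `d`:
the index set of the canonical basis of `(ℂ^d)^{⊗ n}`. -/
abbrev Cfg (d n : ℕ) : Type := Fin n → Fin d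

/-- Linear operators on the Hilbert space of `n` qudits, represented as matrices
in the canonical basis. -/
abbrev Mat (d n : ℕ) : Type := Matrix (Cfg d n) (Cfg d n) ℂ

/-- The trace norm `‖A‖₁ = Tr √(Aᴴ A)`. -/
noncomputable def traceNorm {ι : Type} [Fintype ι] [DecidableEq ι] (A : Matrix ι ι ℂ) : ℝ :=
  ((((Matrix.posSemidef_conjTranspose_mul_self A).1.eigenvectorUnitary : Matrix ι ι ℂ) *
      Matrix.diagonal (((↑) : ℝ → ℂ) ∘ Real.sqrt ∘ (Matrix.posSemidef_conjTranspose_mul_self A).1.eigenvalues) *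
      (star ((Matrix.posSemidef_conjTranspose_mul_self A).1.eigenvectorUnitary : Matrix ι ι ℂ))).trace).re

/-- The operator norm `‖A‖_∞`. -/
noncomputable def opNorm {ι : Type} [Fintype ι] [DecidableEq ι] (A : Matrix ι ι ℂ) : ℝ :=
  ‖Matrix.toEuclideanCLM (𝕜 := ℂ) A‖

/-- Quantum states: positive semidefinite operators with unit trace. -/
def IsState {ι : Type} [Fintype ι] (ρ : Matrix ι ι ℂ) : Prop :=
  ρ.PosSemidef ∧ ρ.trace = 1

/-- Insert the value `s` at position `i` into a configuration `a` of the remaining qudits. -/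
def ins {d n : ℕ} (i : Fin n) (a : {j : Fin n // j ≠ i} → Fin d) (s : Fin d) : Cfg d n :=
  fun j => if h : j = i then s else a ⟨j, h⟩

/-- The partial trace over the `i`-th qudit. -/
noncomputable def ptrace {d n : ℕ} (i : Fin n) (X : Mat d n) :
    Matrix ({j : Fin n // j ≠ i} → Fin d) ({j : Fin n // j ≠ i} → Fin d) ℂ :=
  fun a b => ∑ s : Fin d, X (ins i a s) (ins i b s)

/-- The marginal of `ρ` on the `i`-th qudit (partial trace over all the other qudits). -/
noncomputable def marginal {d n : ℕ} (i : Fin n) (ρ : Mat d n) :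
    Matrix (Fin d) (Fin d) ℂ :=
  fun s t => ∑ a : ({j : Fin n // j ≠ i} → Fin d), ρ (ins i a s) (ins i a t)

/-- Combine a configuration `s` of the qudits in `I` with a configuration `a` of the rest. -/
def insSet {d n : ℕ} (I : Finset (Fin n)) (a : {j : Fin n // j ∉ I} → Fin d)
    (s : {j : Fin n // j ∈ I} → Fin d) : Cfg d n :=
  fun j => if h : j ∈ I then s ⟨j, h⟩ else a ⟨j, h⟩

/-- The partial trace over the qudits in `I`. -/
noncomputable def ptraceSet {d n : ℕ} (I : Finset (Fin n)) (X : Mat d n) :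
    Matrix ({j : Fin n // j ∉ I} → Fin d) ({j : Fin n // j ∉ I} → Fin d) ℂ :=
  fun a b => ∑ s : ({j : Fin n // j ∈ I} → Fin d), X (insSet I a s) (insSet I b s)

/-- The set of values `(1/2) ∑ i ‖X⁽ⁱ⁾‖₁` over all decompositions `X = ∑ i X⁽ⁱ⁾` with
`X⁽ⁱ⁾` self-adjoint and `Tr_i X⁽ⁱ⁾ = 0`. -/
def W1Set {d n : ℕ} (X : Mat d n) : Set ℝ :=
  { r | ∃ Y : Fin n → Mat d n, (∀ i, (Y i).IsHermitian) ∧ (∀ i, ptrace i (Y i) = 0) ∧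
      X = ∑ i, Y i ∧ r = (1 / 2) * ∑ i, traceNorm (Y i) }

/-- The quantum `W₁` norm. -/
noncomputable def W1 {d n : ℕ} (X : Mat d n) : ℝ := sInf (W1Set X)

/-- The quantum Lipschitz constant: the dual norm of the quantum `W₁` norm. -/
noncomputable def lipschitz {d n : ℕ} (H : Mat d n) : ℝ :=
  sSup { r | ∃ X : Mat d n, X.IsHermitian ∧ X.trace = 0 ∧ W1 X ≤ 1 ∧
    r = ((H * X).trace).re }

/-- Extension `Φ ⊗ id_R` of a map on matrices. -/
def extendMap {A B R : Type} [Fintype A] [Fintype B] [Fintype R]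
    (Φ : Matrix A A ℂ → Matrix B B ℂ) (M : Matrix (A × R) (A × R) ℂ) :
    Matrix (B × R) (B × R) ℂ :=
  fun p q => Φ (fun a a' => M (a, p.2) (a', q.2)) p.1 q.1

/-- Quantum channels: completely positive trace-preserving linear maps. -/
def IsCPTP {A B : Type} [Fintype A] [Fintype B]
    (Φ : Matrix A A ℂ →ₗ[ℂ] Matrix B B ℂ) : Prop :=
  (∀ (k : ℕ) (M : Matrix (A × Fin k) (A × Fin k) ℂ), M.PosSemidef →
    (extendMap (fun N => Φ N) M).PosSemidef) ∧
  ∀ M, (Φ M).trace = M.trace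

/-- Action `φ_i ⊗ id` of a single-qudit map `φ` on the `i`-th qudit of `n` qudits. -/
def applyAt {d n : ℕ} (i : Fin n) (φ : Matrix (Fin d) (Fin d) ℂ → Matrix (Fin d) (Fin d) ℂ)
    (X : Mat d n) : Mat d n :=
  fun a b => φ (fun s t => X (Function.update a i s) (Function.update b i t)) (a i) (b i)

/-- Action `φ_I ⊗ id` of a map `φ` on the qudits in `I`. -/
def applyOn {d n : ℕ} (I : Finset (Fin n))
    (φ : Matrix ({j : Fin n // j ∈ I} → Fin d) ({j : Fin n // j ∈ I} → Fin d) ℂ →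
         Matrix ({j : Fin n // j ∈ I} → Fin d) ({j : Fin n // j ∈ I} → Fin d) ℂ)
    (X : Mat d n) : Mat d n :=
  fun a b =>
    φ (fun s t => X (insSet I (fun j => a j) s) (insSet I (fun j => b j) t))
      (fun j => a j) (fun j => b j)

/-- The operator obtained from `X` by permuting the tensor factors according to `π`. -/
def permuteMat {d n : ℕ} (π : Equiv.Perm (Fin n)) (X : Mat d n) : Mat d n :=
  fun a b => X (a ∘ π) (b ∘ π)

/-- Tensor product of an operator on the first `m` qudits with one on the last `n` qudits. -/
def tensorMN {d m n : ℕ} (A : Mat d m) (B : Mat d n) : Mat d (m + n) :=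
  fun a b =>
    A (fun i => a (Fin.castAdd n i)) (fun i => b (Fin.castAdd n i)) *
    B (fun j => a (Fin.natAdd m j)) (fun j => b (Fin.natAdd m j))

/-- Partial trace of an operator on `m + n` qudits over the last `n` qudits. -/
noncomputable def ptraceLast {d m n : ℕ} (X : Mat d (m + n)) : Mat d m :=
  fun a b => ∑ k : Cfg d n, X (Fin.append a k) (Fin.append b k)

/-- Partial trace of an operator on `m + n` qudits over the first `m` qudits. -/
noncomputable def ptraceFirst {d m n : ℕ} (X : Mat d (m + n)) : Mat d n :=
  fun a b => ∑ k : Cfg d m, X (Fin.append k a) (Fin.append k b)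

/-- `n`-fold tensor product `σ₁ ⊗ ⋯ ⊗ σₙ` of single-qudit operators. -/
def tensorAll {d n : ℕ} (σs : Fin n → Matrix (Fin d) (Fin d) ℂ) : Mat d n :=
  fun a b => ∏ i, σs i (a i) (b i)

/-- `I_d^{(i)} ⊗ K`: the identity on the `i`-th qudit tensored with an operator `K`
on the remaining qudits. -/
def idTensorAt {d n : ℕ} (i : Fin n)
    (K : Matrix ({j : Fin n // j ≠ i} → Fin d) ({j : Fin n // j ≠ i} → Fin d) ℂ) :
    Mat d n :=
  fun a b => if a i = b i then K (fun j => a j) (fun j => b j) else 0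

/-- `K ⊗ identity`: an operator acting only on the qudits in `I`. -/
def embedOn {d n : ℕ} (I : Finset (Fin n))
    (K : Matrix ({j : Fin n // j ∈ I} → Fin d) ({j : Fin n // j ∈ I} → Fin d) ℂ) :
    Mat d n :=
  fun a b => if (∀ j, j ∉ I → a j = b j) then K (fun j => a j) (fun j => b j) else 0

/-- The `n`-th tensor power `φ^{⊗n}` of a single-qudit linear map `φ`. -/
noncomputable def tensorPowMap {d n : ℕ}
    (φ : Matrix (Fin d) (Fin d) ℂ → Matrix (Fin d) (Fin d) ℂ) (X : Mat d n) : Mat d n :=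
  fun a b => ∑ s : Cfg d n, ∑ t : Cfg d n,
    X s t * ∏ j, φ (Matrix.single (s j) (t j) 1) (a j) (b j)

/-- The `1 → 1` norm of a map on single-qudit operators. -/
noncomputable def norm1to1 {d : ℕ}
    (F : Matrix (Fin d) (Fin d) ℂ → Matrix (Fin d) (Fin d) ℂ) : ℝ :=
  sSup { r | ∃ ρ : Matrix (Fin d) (Fin d) ℂ, IsState ρ ∧ r = traceNorm (F ρ) }

/-- The diamond norm of a map on single-qudit operators. -/
noncomputable def diamondNorm {d : ℕ}
    (F : Matrix (Fin d) (Fin d) ℂ → Matrix (Fin d) (Fin d) ℂ) : ℝ :=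
  sSup { r | ∃ ρ : Matrix (Fin d × Fin d) (Fin d × Fin d) ℂ, IsState ρ ∧
    r = traceNorm (extendMap F ρ) }

/-- The contraction coefficient (`W₁ → W₁` norm) of a map on `n`-qudit operators. -/
noncomputable def W1toW1 {d n : ℕ} (Φ : Mat d n → Mat d n) : ℝ :=
  sSup { r | ∃ X : Mat d n, X.IsHermitian ∧ X.trace = 0 ∧ W1 X ≤ 1 ∧ r = W1 (Φ X) }

/-- The von Neumann entropy `S(ρ) = -Tr[ρ ln ρ]` (natural logarithm). -/
noncomputable def vnEntropy {ι : Type} [Fintype ι] [DecidableEq ι] (ρ : Matrix ι ι ℂ) : ℝ :=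
  if h : ρ.IsHermitian then -∑ i, h.eigenvalues i * Real.log (h.eigenvalues i) else 0

/-- The logarithm of a self-adjoint matrix, via the spectral decomposition. -/
noncomputable def matLog {ι : Type} [Fintype ι] [DecidableEq ι] (ρ : Matrix ι ι ℂ) :
    Matrix ι ι ℂ :=
  if h : ρ.IsHermitian then
    (h.eigenvectorUnitary : Matrix ι ι ℂ) *
      Matrix.diagonal (fun i => (Real.log (h.eigenvalues i) : ℂ)) *
      (star (h.eigenvectorUnitary : Matrix ι ι ℂ))
  else 0

/-- The quantum relative entropy `S(ρ‖σ) = Tr[ρ (ln ρ - ln σ)]`. -/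
noncomputable def relEntropy {ι : Type} [Fintype ι] [DecidableEq ι]
    (ρ σ : Matrix ι ι ℂ) : ℝ :=
  ((ρ * (matLog ρ - matLog σ)).trace).re

/-- The Hamming distance between two configurations. -/
def hamming {d n : ℕ} (x y : Cfg d n) : ℕ :=
  (Finset.univ.filter (fun i => x i ≠ y i)).card

/-- Probability distributions on a finite set. -/
def IsProb {α : Type} [Fintype α] (p : α → ℝ) : Prop :=
  (∀ x, 0 ≤ p x) ∧ ∑ x, p x = 1

/-- Couplings of two probability distributions. -/
def IsCoupling {α : Type} [Fintype α] (π : α × α → ℝ) (p q : α → ℝ) : Prop :=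
  IsProb π ∧ (∀ x, ∑ y, π (x, y) = p x) ∧ (∀ y, ∑ x, π (x, y) = q y)

/-- The classical Wasserstein distance of order 1 with respect to the Hamming distance. -/
noncomputable def classicalW1 {d n : ℕ} (p q : Cfg d n → ℝ) : ℝ :=
  sInf { c | ∃ π : Cfg d n × Cfg d n → ℝ, IsCoupling π p q ∧
    c = ∑ x : Cfg d n, ∑ y : Cfg d n, (hamming x y : ℝ) * π (x, y) }

/-- The Lipschitz constant of a function on `[d]^n` with respect to the Hamming distance. -/
noncomputable def classicalLip {d n : ℕ} (f : Cfg d n → ℝ) : ℝ :=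
  sSup { r | ∃ x y : Cfg d n, x ≠ y ∧ r = |f x - f y| / (hamming x y : ℝ) }



section AuxTraceNorm

variable {ι : Type} [Fintype ι] [DecidableEq ι]

lemma traceNorm_eq_sum (A : Matrix ι ι ℂ) :
    traceNorm A = ∑ i, Real.sqrt ((Matrix.posSemidef_conjTranspose_mul_self A).1.eigenvalues i) := by
  have hH := Matrix.posSemidef_conjTranspose_mul_self A
  have hU : (star (hH.1.eigenvectorUnitary : Matrix ι ι ℂ)) * (hH.1.eigenvectorUnitary : Matrix ι ι ℂ) = 1 :=
    Matrix.mem_unitaryGroup_iff'.mp (hH.1.eigenvectorUnitary).2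
  rw [traceNorm, Matrix.trace_mul_cycle, hU, one_mul,
    Matrix.trace_diagonal, Complex.re_sum]
  simp

lemma traceNorm_nonneg (A : Matrix ι ι ℂ) : 0 ≤ traceNorm A := by
  rw [traceNorm_eq_sum]
  exact Finset.sum_nonneg fun i _ => Real.sqrt_nonneg _

lemma traceNorm_zero : traceNorm (0 : Matrix ι ι ℂ) = 0 := by
  have hH := Matrix.posSemidef_conjTranspose_mul_self (0 : Matrix ι ι ℂ)
  have h0 : (Matrix.posSemidef_conjTranspose_mul_self (0 : Matrix ι ι ℂ)).1.eigenvalues = 0 :=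
    hH.1.eigenvalues_eq_zero_iff.mpr (by simp)
  rw [traceNorm_eq_sum, h0]
  simp

namespace QW1Aux

open Matrix

/-- Euclidean norm of a raw complex vector. -/
noncomputable def en {ι : Type} [Fintype ι] (v : ι → ℂ) : ℝ :=
  ‖(WithLp.equiv 2 (ι → ℂ)).symm v‖

lemma en_nonneg (v : ι → ℂ) : 0 ≤ en v := norm_nonneg _

lemma en_sq (v : ι → ℂ) : en v ^ 2 = (dotProduct (star v) v).re := by
  rw [en, ← inner_self_eq_norm_sq (𝕜 := ℂ), dotProduct_comm]
  rfl

lemma cs (x y : ι → ℂ) : (dotProduct (star x) y).re ≤ en x * en y := by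
  calc (dotProduct (star x) y).re
      ≤ ‖dotProduct (star x) y‖ := Complex.re_le_norm _
    _ = ‖(inner ℂ ((WithLp.equiv 2 (ι → ℂ)).symm x) ((WithLp.equiv 2 (ι → ℂ)).symm y) : ℂ)‖ := by
        exact congrArg _ (dotProduct_comm _ _)
    _ ≤ en x * en y := norm_inner_le_norm _ _

end QW1Aux

namespace QW1Aux
open Matrix

lemma trace_eq_sum_cols (U B : Matrix ι ι ℂ) (hU : U * star U = 1) :
    B.trace = ∑ i, dotProduct (star (fun k => U k i)) (B *ᵥ (fun k => U k i)) := by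
  have h : B.trace = (star U * B * U).trace := by
    rw [Matrix.trace_mul_cycle, hU, one_mul]
  rw [h, Matrix.trace]
  apply Finset.sum_congr rfl
  intro i _
  simp only [Matrix.diag_apply, Matrix.mul_apply, dotProduct, Matrix.mulVec,
    Matrix.star_apply, Pi.star_apply, dotProduct, Finset.sum_mul, Finset.mul_sum]
  rw [Finset.sum_comm]
  apply Finset.sum_congr rfl
  intro k _
  apply Finset.sum_congr rfl
  intro l _
  ring

lemma re_trace_mul_le (M A : Matrix ι ι ℂ)
    (hM : ∀ v : ι → ℂ, en (Mᴴ *ᵥ v) ≤ en v) :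
    ((M * A).trace).re ≤ traceNorm A := by
  set hH := Matrix.posSemidef_conjTranspose_mul_self A with hHdef
  set h1 := hH.1
  set U : Matrix ι ι ℂ := (h1.eigenvectorUnitary : Matrix ι ι ℂ) with hUdef
  have hU1 : U * star U = 1 := Matrix.mem_unitaryGroup_iff.mp h1.eigenvectorUnitary.2
  rw [trace_eq_sum_cols U _ hU1, Complex.re_sum, traceNorm_eq_sum]
  apply Finset.sum_le_sum
  intro i _
  set v : ι → ℂ := fun k => U k i with hv
  have hvb : v = ⇑(h1.eigenvectorBasis i) := by
    funext k; exact h1.eigenvectorUnitary_apply k i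
  have henv : en v = 1 := by
    rw [hvb]
    exact h1.eigenvectorBasis.orthonormal.1 i
  set w : ι → ℂ := A *ᵥ v with hw
  have hww : (dotProduct (star w) w).re = h1.eigenvalues i := by
    have h2 : dotProduct (star w) w
        = dotProduct (star v) ((Aᴴ * A) *ᵥ v) := by
      simp only [hw, Matrix.star_mulVec, Matrix.dotProduct_mulVec, Matrix.vecMul_vecMul]
    have h3 : (Aᴴ * A) *ᵥ v = h1.eigenvalues i • v := by
      rw [hvb]; exact h1.mulVec_eigenvectorBasis i
    rw [h2, h3, dotProduct_smul]
    have h4 : (dotProduct (star v) v).re = 1 := by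
      have := en_sq v; rw [henv] at this; simpa using this.symm
    rw [Complex.real_smul]
    simp [Complex.mul_re, h4]
  have henw : en w = Real.sqrt (h1.eigenvalues i) := by
    have : en w ^ 2 = h1.eigenvalues i := by rw [en_sq, hww]
    rw [← this, Real.sqrt_sq (en_nonneg w)]
  have hrw : dotProduct (star v) ((M * A) *ᵥ v)
      = dotProduct (star (Mᴴ *ᵥ v)) w := by
    rw [Matrix.star_mulVec, Matrix.conjTranspose_conjTranspose, ← Matrix.mulVec_mulVec,
      Matrix.dotProduct_mulVec]
  calc (dotProduct (star v) ((M * A) *ᵥ v)).re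
      = (dotProduct (star (Mᴴ *ᵥ v)) w).re := by rw [hrw]
    _ ≤ en (Mᴴ *ᵥ v) * en w := cs _ _
    _ ≤ en v * en w := by
        apply mul_le_mul_of_nonneg_right (hM v) (en_nonneg w)
    _ = Real.sqrt (h1.eigenvalues i) := by rw [henv, henw, one_mul]

end QW1Aux

namespace QW1Aux
open Matrix

lemma dot_self_re (v : ι → ℂ) :
    (dotProduct (star v) v).re = ∑ i, Complex.normSq (v i) := by
  rw [dotProduct, Complex.re_sum]
  apply Finset.sum_congr rfl
  intro i _
  simp [Complex.normSq_apply, Complex.mul_re]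

lemma dot_mulVec_self (B : Matrix ι ι ℂ) (v : ι → ℂ) :
    dotProduct (star (B *ᵥ v)) (B *ᵥ v)
      = dotProduct (star v) ((Bᴴ * B) *ᵥ v) := by
  simp only [Matrix.star_mulVec, Matrix.dotProduct_mulVec, Matrix.vecMul_vecMul]

lemma quad (W : Matrix ι ι ℂ) (c : ι → ℝ) (v : ι → ℂ) :
    (dotProduct (star v)
        ((W * Matrix.diagonal (fun i => (c i : ℂ)) * Wᴴ) *ᵥ v)).re
      = ∑ i, c i * Complex.normSq ((Wᴴ *ᵥ v) i) := by
  have h : dotProduct (star v)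
        ((W * Matrix.diagonal (fun i => (c i : ℂ)) * Wᴴ) *ᵥ v)
      = dotProduct (star (Wᴴ *ᵥ v))
          (Matrix.diagonal (fun i => (c i : ℂ)) *ᵥ (Wᴴ *ᵥ v)) := by
    simp only [Matrix.star_mulVec, Matrix.conjTranspose_conjTranspose,
      Matrix.dotProduct_mulVec, Matrix.vecMul_vecMul, Matrix.mulVec_mulVec, mul_assoc]
  rw [h, dotProduct, Complex.re_sum]
  apply Finset.sum_congr rfl
  intro i _
  rw [Matrix.mulVec_diagonal]
  simp [Complex.normSq_apply, Complex.mul_re]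
  ring

lemma en_le_en {x y : ι → ℂ} (h : (dotProduct (star x) x).re ≤ (dotProduct (star y) y).re) :
    en x ≤ en y := by
  have hx : en x = Real.sqrt ((dotProduct (star x) x).re) := by
    rw [← en_sq, Real.sqrt_sq (en_nonneg x)]
  have hy : en y = Real.sqrt ((dotProduct (star y) y).re) := by
    rw [← en_sq, Real.sqrt_sq (en_nonneg y)]
  rw [hx, hy]
  exact Real.sqrt_le_sqrt h

lemma exists_dual (C : Matrix ι ι ℂ) {ε : ℝ} (hε : 0 < ε) :
    ∃ M : Matrix ι ι ℂ, (∀ v, en (Mᴴ *ᵥ v) ≤ en v) ∧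
      traceNorm C ≤ ((M * C).trace).re + Fintype.card ι * ε := by
  set hH := Matrix.posSemidef_conjTranspose_mul_self C with hHdef
  set h1 := hH.1
  set U : Matrix ι ι ℂ := (h1.eigenvectorUnitary : Matrix ι ι ℂ) with hUdef
  set μ : ι → ℝ := h1.eigenvalues with hμdef
  set lam : ι → ℝ := fun i => Real.sqrt (μ i) with hlamdef
  have hμnn : ∀ i, 0 ≤ μ i := fun i => hH.eigenvalues_nonneg i
  have hlamnn : ∀ i, 0 ≤ lam i := fun i => Real.sqrt_nonneg _
  have hμsq : ∀ i, μ i = lam i ^ 2 := fun i => (Real.sq_sqrt (hμnn i)).symm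
  have hpos : ∀ i, 0 < lam i + ε := fun i => add_pos_of_nonneg_of_pos (hlamnn i) hε
  have hU1 : U * star U = 1 := Matrix.mem_unitaryGroup_iff.mp h1.eigenvectorUnitary.2
  have hU2 : star U * U = 1 := Matrix.mem_unitaryGroup_iff'.mp h1.eigenvectorUnitary.2
  have hspec : Cᴴ * C = U * Matrix.diagonal (fun i => ((μ i : ℝ) : ℂ)) * star U := by
    have := h1.spectral_theorem
    rw [this, Unitary.conjStarAlgAut_apply]; rfl
  set D : Matrix ι ι ℂ := Matrix.diagonal (fun i => (((lam i + ε)⁻¹ : ℝ) : ℂ)) with hDdef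
  set N : Matrix ι ι ℂ := U * D * star U with hNdef
  have hDH : Dᴴ = D := by
    have hst : (star fun i => (((lam i + ε)⁻¹ : ℝ) : ℂ)) = fun i => (((lam i + ε)⁻¹ : ℝ) : ℂ) := by
      funext i
      simp only [Pi.star_apply, RCLike.star_def]
      exact Complex.conj_ofReal _
    rw [hDdef, Matrix.diagonal_conjTranspose, hst]
  have hNH : Nᴴ = N := by
    rw [hNdef, Matrix.conjTranspose_mul, Matrix.conjTranspose_mul, hDH,
      Matrix.star_eq_conjTranspose, Matrix.conjTranspose_conjTranspose,
      ← Matrix.star_eq_conjTranspose, mul_assoc]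
  refine ⟨N * Cᴴ, ?_, ?_⟩
  · -- contraction
    intro v
    have hMH : (N * Cᴴ)ᴴ = C * N := by
      rw [Matrix.conjTranspose_mul, hNH, Matrix.conjTranspose_conjTranspose]
    rw [hMH]
    apply en_le_en
    rw [dot_mulVec_self]
    have hCN : (C * N)ᴴ * (C * N)
        = U * Matrix.diagonal (fun i => (((lam i + ε)⁻¹ * μ i * (lam i + ε)⁻¹ : ℝ) : ℂ)) * Uᴴ := by
      rw [Matrix.conjTranspose_mul, hNH]
      calc N * Cᴴ * (C * N) = N * (Cᴴ * C) * N := by simp only [mul_assoc]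
        _ = (U * D * star U) * (U * Matrix.diagonal (fun i => ((μ i : ℝ) : ℂ)) * star U) * (U * D * star U) := by
            rw [← hNdef, hspec]
        _ = U * (D * (star U * U * (Matrix.diagonal (fun i => ((μ i : ℝ) : ℂ)) * (star U * U) * D))) * star U := by
            simp only [mul_assoc]
        _ = U * (D * Matrix.diagonal (fun i => ((μ i : ℝ) : ℂ)) * D) * star U := by
            rw [hU2, one_mul, mul_one]
            simp only [mul_assoc]
        _ = U * Matrix.diagonal (fun i => (((lam i + ε)⁻¹ * μ i * (lam i + ε)⁻¹ : ℝ) : ℂ)) * Uᴴ := by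
            rw [hDdef, Matrix.diagonal_mul_diagonal, Matrix.diagonal_mul_diagonal,
              ← Matrix.star_eq_conjTranspose]
            congr 2
            funext i
            push_cast
            ring
    rw [hCN, quad]
    have hone : (dotProduct (star v) v).re = ∑ i, Complex.normSq ((Uᴴ *ᵥ v) i) := by
      have hq := quad U (fun _ => (1 : ℝ)) v
      simp only [Complex.ofReal_one, Matrix.diagonal_one, mul_one, one_mul] at hq
      rw [← hq, ← Matrix.star_eq_conjTranspose, hU1]
      simp
    rw [hone]
    apply Finset.sum_le_sum
    intro i _
    have h01 : lam i * (lam i + ε)⁻¹ ≤ 1 := by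
      rw [← div_eq_mul_inv, div_le_one (hpos i)]
      linarith [hε]
    have h0 : 0 ≤ lam i * (lam i + ε)⁻¹ :=
      mul_nonneg (hlamnn i) (inv_nonneg.mpr (hpos i).le)
    have hg1 : (lam i + ε)⁻¹ * μ i * (lam i + ε)⁻¹ ≤ 1 := by
      calc (lam i + ε)⁻¹ * μ i * (lam i + ε)⁻¹
          = (lam i * (lam i + ε)⁻¹) * (lam i * (lam i + ε)⁻¹) := by rw [hμsq]; ring
        _ ≤ 1 * 1 := mul_le_mul h01 h01 h0 zero_le_one
        _ = 1 := one_mul 1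
    calc (lam i + ε)⁻¹ * μ i * (lam i + ε)⁻¹ * Complex.normSq ((Uᴴ *ᵥ v) i)
        ≤ 1 * Complex.normSq ((Uᴴ *ᵥ v) i) :=
          mul_le_mul_of_nonneg_right hg1 (Complex.normSq_nonneg _)
      _ = Complex.normSq ((Uᴴ *ᵥ v) i) := one_mul _
  · -- trace bound
    have hMC : N * Cᴴ * C = U * Matrix.diagonal (fun i => (((lam i + ε)⁻¹ * μ i : ℝ) : ℂ)) * star U := by
      calc N * Cᴴ * C = N * (Cᴴ * C) := by rw [mul_assoc]
        _ = (U * D * star U) * (U * Matrix.diagonal (fun i => ((μ i : ℝ) : ℂ)) * star U) := by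
            rw [← hNdef, hspec]
        _ = U * (D * (star U * U * Matrix.diagonal (fun i => ((μ i : ℝ) : ℂ)))) * star U := by
            simp only [mul_assoc]
        _ = U * (D * Matrix.diagonal (fun i => ((μ i : ℝ) : ℂ))) * star U := by
            rw [hU2, one_mul]
        _ = U * Matrix.diagonal (fun i => (((lam i + ε)⁻¹ * μ i : ℝ) : ℂ)) * star U := by
            rw [hDdef, Matrix.diagonal_mul_diagonal]
            congr 2
            funext i
            push_cast
            ring
    have htr : ((N * Cᴴ * C).trace).re = ∑ i, (lam i + ε)⁻¹ * μ i := by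
      rw [hMC, Matrix.trace_mul_cycle, hU2, one_mul, Matrix.trace_diagonal, Complex.re_sum]
      exact Finset.sum_congr rfl fun i _ => Complex.ofReal_re _
    rw [mul_assoc, ← mul_assoc N, htr, traceNorm_eq_sum]
    have hcard : (Fintype.card ι : ℝ) * ε = ∑ _i : ι, ε := by
      rw [Finset.sum_const, nsmul_eq_mul, Finset.card_univ]
    rw [hcard, ← Finset.sum_add_distrib]
    apply Finset.sum_le_sum
    intro i _
    have h2 : lam i - ε ≤ (lam i + ε)⁻¹ * μ i := by
      rw [← div_eq_inv_mul, le_div_iff₀ (hpos i)]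
      nlinarith [hμsq i, hε]
    linarith

lemma traceNorm_add_le (A B : Matrix ι ι ℂ) :
    traceNorm (A + B) ≤ traceNorm A + traceNorm B := by
  refine le_of_forall_pos_le_add ?_
  intro δ hδ
  have hcpos : (0 : ℝ) < (Fintype.card ι : ℝ) + 1 := by positivity
  set ε : ℝ := δ / ((Fintype.card ι : ℝ) + 1) with hεdef
  have hε : 0 < ε := div_pos hδ hcpos
  obtain ⟨M, hM, hbound⟩ := exists_dual (A + B) hε
  have h1 := re_trace_mul_le M A hM
  have h2 := re_trace_mul_le M B hM
  have h3 : ((M * (A + B)).trace).re = ((M * A).trace).re + ((M * B).trace).re := by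
    rw [mul_add, Matrix.trace_add, Complex.add_re]
  have h4 : (Fintype.card ι : ℝ) * ε ≤ δ := by
    have h5 : ((Fintype.card ι : ℝ) + 1) * ε = δ := by
      rw [hεdef, mul_div_cancel₀ _ (ne_of_gt hcpos)]
    nlinarith [hε.le]
  linarith

lemma traceNorm_sum_le {n : ℕ} (f : Fin n → Matrix ι ι ℂ) :
    traceNorm (∑ i, f i) ≤ ∑ i, traceNorm (f i) :=
  Finset.le_sum_of_subadditive traceNorm traceNorm_zero.le traceNorm_add_le Finset.univ f

end QW1Aux


lemma ptrace_zero {d n : ℕ} (i : Fin n) : ptrace i (0 : Mat d n) = 0 := by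
  funext a b
  simp [ptrace]

lemma ptrace_sub {d n : ℕ} (i : Fin n) (ρ σ : Mat d n) :
    ptrace i (ρ - σ) = ptrace i ρ - ptrace i σ := by
  funext a b
  simp [ptrace, Matrix.sub_apply, Finset.sum_sub_distrib]

lemma W1_eq_half {d n : ℕ} (X : Mat d n) (hX : X.IsHermitian)
    (hpt : ∃ i, ptrace i X = 0) : W1 X = (1 / 2) * traceNorm X := by
  obtain ⟨i, hi⟩ := hpt
  have hmem : (1 / 2) * traceNorm X ∈ W1Set X := by
    refine ⟨fun j => if j = i then X else 0, ?_, ?_, ?_, ?_⟩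
    · intro j
      by_cases h : j = i <;> simp [h, hX, Matrix.isHermitian_zero]
    · intro j
      by_cases h : j = i
      · subst h; simpa using hi
      · simp [h, ptrace_zero]
    · rw [Finset.sum_ite_eq' Finset.univ i]
      simp
    · congr 1
      have hterm : ∀ j, traceNorm (if j = i then X else 0)
          = if j = i then traceNorm X else 0 := by
        intro j; by_cases h : j = i <;> simp [h, traceNorm_zero]
      rw [Finset.sum_congr rfl fun j _ => hterm j, Finset.sum_ite_eq' Finset.univ i]
      simp
  have hlb : ∀ r ∈ W1Set X, (1 / 2) * traceNorm X ≤ r := by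
    rintro r ⟨Y, -, -, hsum, rfl⟩
    have h1 : traceNorm X ≤ ∑ j, traceNorm (Y j) := by
      rw [hsum]; exact QW1Aux.traceNorm_sum_le Y
    have : (0:ℝ) ≤ 1 / 2 := by norm_num
    nlinarith
  apply le_antisymm
  · exact csInf_le ⟨_, hlb⟩ hmem
  · exact le_csInf ⟨_, hmem⟩ hlb

end AuxTraceNorm

theorem stmt8 {d n : ℕ} (hd : 2 ≤ d) (hn : 1 ≤ n) :
    (∀ X : Mat d n, X.IsHermitian → X.trace = 0 → (∃ i, ptrace i X = 0) →
      W1 X = (1 / 2) * traceNorm X) ∧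
    ∀ ρ σ : Mat d n, IsState ρ → IsState σ → (∃ i, ptrace i ρ = ptrace i σ) →
      W1 (ρ - σ) = (1 / 2) * traceNorm (ρ - σ) := by
  constructor
  · intro X hX _ hpt
    exact W1_eq_half X hX hpt
  · rintro ρ σ hρ hσ ⟨i, hi⟩
    apply W1_eq_half
    · exact hρ.1.1.sub hσ.1.1
    · exact ⟨i, by rw [ptrace_sub, hi, sub_self]⟩

end QW1
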